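/- arXiv:2601.22443 — 2 statements merged into one kernel-verified Lean document; each statement's English description precedes it below -/
import Mathlib

section
/- Let y* ∈ ℝ^m, A ∈ ℝ^{m×n}, σ, τ > 0, and let μ_1, …, μ_M ∈ ℝ^n with positive weights w_1, …, w_M summing to 1. Set Σ = σ² I_m + τ² A Aᵀ, s_j(y*) = (1/2)(y* − A μ_j)ᵀ Σ⁻¹ (y* − A μ_j), and w̃_j ∝ w_j · φ(y*; A μ_j, Σ) normalized so that ∑_j w̃_j = 1. Define the posterior means m_j(y*) = μ_j + τ² Aᵀ Σ⁻¹ (y* − A μ_j) and posterior covariance Σ_post = τ² I_n − τ⁴ Aᵀ Σ⁻¹ A, and let π(· | y*) be the mixture probability measure ∑_{j=1}^M w̃_j N(m_j(y*), Σ_post) on ℝ^n. Assume (1) there exists C > 1 with 1/C ≤ w_i/w_j ≤ C for all i, j, and (2) there is a unique minimizer j* of s_j(y*) with per-dimension score gap (s_{(2)}(y*) − s_{(1)}(y*))/m ≥ δ₀ > 0. Then the total-variation distance satisfies ‖π(· | y*) − N(m_{j*}(y*), Σ_post)‖_TV ≤ C·M·exp(−δ₀·m). -/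
open MeasureTheory Matrix Finset

/-- Multivariate Gaussian density `φ(x; μ, S)` on `ℝ^ι`. -/
noncomputable def gaussDensity {ι : Type*} [Fintype ι] [DecidableEq ι]
    (S : Matrix ι ι ℝ) (μ x : ι → ℝ) : ℝ :=
  (2 * Real.pi) ^ (-(Fintype.card ι : ℝ) / 2) * S.det ^ (-(1 : ℝ) / 2) *
    Real.exp (-(1 / 2) * ((x - μ) ⬝ᵥ (S⁻¹ *ᵥ (x - μ))))

/-- The Gaussian probability measure `N(μ, S)` on `ℝ^ι`, given through its
Lebesgue density. -/
noncomputable def gaussMeasure {ι : Type*} [Fintype ι] [DecidableEq ι]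
    (S : Matrix ι ι ℝ) (μ : ι → ℝ) : Measure (ι → ℝ) :=
  volume.withDensity fun x => ENNReal.ofReal (gaussDensity S μ x)

open scoped MatrixOrder in
lemma exp_quad_integral {ι : Type*} [Fintype ι] [DecidableEq ι]
    {Q : Matrix ι ι ℝ} (hQ : Q.PosDef) :
    Integrable (fun x : ι → ℝ => Real.exp (-(1/2) * (x ⬝ᵥ (Q *ᵥ x)))) ∧
    ∫ x : ι → ℝ, Real.exp (-(1/2) * (x ⬝ᵥ (Q *ᵥ x)))
      = (Real.sqrt Q.det)⁻¹ * Real.sqrt (2 * Real.pi) ^ (Fintype.card ι) := by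
  set B := CFC.sqrt Q with hB
  have hBB : B * B = Q := CFC.sqrt_mul_sqrt_self Q hQ.posSemidef.nonneg
  have hBsym : Bᵀ = B := by
    have h : Bᴴ = B := (CFC.sqrt_nonneg Q).posSemidef.1
    rw [← Matrix.conjTranspose_eq_transpose_of_trivial]
    exact h
  have hdet2 : B.det * B.det = Q.det := by rw [← Matrix.det_mul, hBB]
  have hdetQ : (0:ℝ) < Q.det := hQ.det_pos
  have hdetB : B.det ≠ 0 := by
    intro h
    rw [← hdet2, h, mul_zero] at hdetQ
    exact lt_irrefl 0 hdetQ
  have habs : |B.det| = Real.sqrt Q.det := by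
    rw [← hdet2, Real.sqrt_mul_self_eq_abs]
  have hquad : ∀ x : ι → ℝ, x ⬝ᵥ (Q *ᵥ x) = (B *ᵥ x) ⬝ᵥ (B *ᵥ x) := by
    intro x
    rw [← hBB, ← Matrix.mulVec_mulVec, Matrix.dotProduct_mulVec]
    congr 1
    rw [← hBsym, Matrix.vecMul_transpose, hBsym]
  set G : (ι → ℝ) → ℝ := fun y => Real.exp (-(1/2) * (y ⬝ᵥ y)) with hG
  have hGprod : ∀ y : ι → ℝ, G y = ∏ i, Real.exp (-(1/2) * (y i * y i)) := by
    intro y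
    rw [hG]
    simp only [dotProduct, Finset.mul_sum, ← Real.exp_sum, neg_mul, Finset.sum_neg_distrib]
  have h1d : Integrable (fun t : ℝ => Real.exp (-(1/2) * (t * t))) := by
    have := integrable_exp_neg_mul_sq (by norm_num : (0:ℝ) < 1/2)
    simpa [pow_two] using this
  have hGcont : Continuous G := by
    apply Real.continuous_exp.comp
    apply Continuous.mul continuous_const
    unfold dotProduct
    exact continuous_finset_sum _ fun i _ => ((continuous_apply i).mul (continuous_apply i))
  have hGint : Integrable G := by
    have := MeasureTheory.Integrable.fintype_prod (E := ℝ)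
      (f := fun _ : ι => fun t : ℝ => Real.exp (-(1/2) * (t * t))) (fun i => h1d)
    apply this.congr
    filter_upwards with y
    rw [hGprod]
  have hGval : ∫ y : ι → ℝ, G y = Real.sqrt (2 * Real.pi) ^ (Fintype.card ι) := by
    have h3 : ∫ y : ι → ℝ, G y
        = (∫ t : ℝ, Real.exp (-(1/2) * (t * t))) ^ (Fintype.card ι) := by
      rw [← MeasureTheory.integral_fintype_prod_eq_pow (ι := ι)
        (fun t : ℝ => Real.exp (-(1/2) * (t * t)))]
      exact integral_congr_ae (by filter_upwards with y; rw [hGprod])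
    rw [h3]
    congr 1
    have h4 := integral_gaussian (1/2)
    have h2 : (fun t : ℝ => Real.exp (-(1/2) * (t * t)))
        = fun t : ℝ => Real.exp (-(1/2) * t ^ 2) := by
      funext t; rw [pow_two]
    rw [h2]
    rw [h4]
    congr 1
    ring
  have hTmeas : Measurable (fun x : ι → ℝ => B *ᵥ x) := by
    apply measurable_pi_lambda
    intro i
    exact Finset.measurable_sum _ fun j _ => (measurable_pi_apply j).const_mul _
  have hmap : Measure.map (Matrix.toLin' B) volume
      = ENNReal.ofReal |B.det⁻¹| • volume :=
    Real.map_matrix_volume_pi_eq_smul_volume_pi hdetB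
  have hTeq : (fun x : ι → ℝ => B *ᵥ x) = Matrix.toLin' B := by
    funext x; rw [Matrix.toLin'_apply]
  have hTmeas' : Measurable (⇑(Matrix.toLin' B)) := hTeq ▸ hTmeas
  have hint_comp : Integrable (fun x : ι → ℝ => G (B *ᵥ x)) := by
    have heq : (fun x : ι → ℝ => G (B *ᵥ x)) = G ∘ (Matrix.toLin' B) := by
      funext x; simp [Function.comp, Matrix.toLin'_apply]
    rw [heq, ← MeasureTheory.integrable_map_measure hGcont.aestronglyMeasurable
      hTmeas'.aemeasurable, hmap]
    exact hGint.smul_measure ENNReal.ofReal_ne_top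
  have hval_comp : ∫ x : ι → ℝ, G (B *ᵥ x)
      = |B.det|⁻¹ * (Real.sqrt (2 * Real.pi) ^ (Fintype.card ι)) := by
    have h5 : ∫ x : ι → ℝ, G (B *ᵥ x) = ∫ y, G y ∂(Measure.map (Matrix.toLin' B) volume) := by
      rw [MeasureTheory.integral_map hTmeas'.aemeasurable hGcont.aestronglyMeasurable]
      simp_rw [Matrix.toLin'_apply]
    rw [h5, hmap, MeasureTheory.integral_smul_measure, hGval]
    rw [ENNReal.toReal_ofReal (abs_nonneg _), abs_inv]
    simp [smul_eq_mul]
  constructor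
  · apply hint_comp.congr
    filter_upwards with x
    rw [hquad]
  · rw [show (fun x : ι → ℝ => Real.exp (-(1/2) * (x ⬝ᵥ (Q *ᵥ x)))) = fun x => G (B *ᵥ x) by
      funext x; rw [hG]; simp only [← hquad]]
    rw [hval_comp, habs]

lemma gaussDensity_pos {ι : Type*} [Fintype ι] [DecidableEq ι]
    {S : Matrix ι ι ℝ} (hS : S.PosDef) (μ x : ι → ℝ) : 0 < gaussDensity S μ x := by
  unfold gaussDensity
  have h2π : (0:ℝ) < 2 * Real.pi := by positivity
  exact mul_pos (mul_pos (Real.rpow_pos_of_pos h2π _) (Real.rpow_pos_of_pos hS.det_pos _))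
    (Real.exp_pos _)

lemma gaussDensity_integral {ι : Type*} [Fintype ι] [DecidableEq ι]
    {S : Matrix ι ι ℝ} (hS : S.PosDef) (μ : ι → ℝ) :
    Integrable (gaussDensity S μ) ∧ ∫ x, gaussDensity S μ x = 1 := by
  have hQ : (S⁻¹).PosDef := hS.inv
  obtain ⟨hint, hval⟩ := exp_quad_integral hQ
  have hshift_int : Integrable
      (fun x : ι → ℝ => Real.exp (-(1/2) * ((x - μ) ⬝ᵥ (S⁻¹ *ᵥ (x - μ))))) :=
    hint.comp_sub_right μ
  have hshift_val : ∫ x : ι → ℝ, Real.exp (-(1/2) * ((x - μ) ⬝ᵥ (S⁻¹ *ᵥ (x - μ))))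
      = (Real.sqrt (S⁻¹).det)⁻¹ * Real.sqrt (2 * Real.pi) ^ (Fintype.card ι) := by
    rw [integral_sub_right_eq_self
      (fun x : ι → ℝ => Real.exp (-(1/2) * (x ⬝ᵥ (S⁻¹ *ᵥ x)))) μ, hval]
  have hdet : (0:ℝ) < S.det := hS.det_pos
  have hdetinv : (S⁻¹).det = S.det⁻¹ := by
    rw [Matrix.det_nonsing_inv, Ring.inverse_eq_inv']
  have h2π : (0:ℝ) < 2 * Real.pi := by positivity
  set K : ℝ := (2 * Real.pi) ^ (-(Fintype.card ι : ℝ) / 2) * S.det ^ (-(1 : ℝ) / 2) with hK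
  have hKconst : ∀ x, gaussDensity S μ x
      = K * Real.exp (-(1/2) * ((x - μ) ⬝ᵥ (S⁻¹ *ᵥ (x - μ)))) := by
    intro x; rfl
  constructor
  · apply (hshift_int.const_mul K).congr
    filter_upwards with x
    rw [hKconst]
  · rw [show (fun x => gaussDensity S μ x)
      = fun x => K * Real.exp (-(1/2) * ((x - μ) ⬝ᵥ (S⁻¹ *ᵥ (x - μ)))) from funext hKconst]
    rw [MeasureTheory.integral_const_mul, hshift_val, hdetinv]
    rw [Real.sqrt_inv, inv_inv]
    have e1 : (2 * Real.pi) ^ (-(Fintype.card ι : ℝ) / 2)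
        * Real.sqrt (2 * Real.pi) ^ (Fintype.card ι) = 1 := by
      rw [Real.sqrt_eq_rpow, ← Real.rpow_natCast ((2 * Real.pi) ^ ((1:ℝ)/2)) (Fintype.card ι),
        ← Real.rpow_mul h2π.le, ← Real.rpow_add h2π]
      rw [show -(Fintype.card ι : ℝ) / 2 + 1/2 * (Fintype.card ι : ℝ) = 0 by ring,
        Real.rpow_zero]
    have e2 : S.det ^ (-(1 : ℝ) / 2) * Real.sqrt S.det = 1 := by
      rw [Real.sqrt_eq_rpow, ← Real.rpow_add hdet,
        show -(1:ℝ)/2 + 1/2 = 0 by ring, Real.rpow_zero]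
    calc K * (Real.sqrt S.det * Real.sqrt (2 * Real.pi) ^ (Fintype.card ι))
        = ((2 * Real.pi) ^ (-(Fintype.card ι : ℝ) / 2)
            * Real.sqrt (2 * Real.pi) ^ (Fintype.card ι))
          * (S.det ^ (-(1 : ℝ) / 2) * Real.sqrt S.det) := by rw [hK]; ring
      _ = 1 := by rw [e1, e2, one_mul]

lemma gaussMeasure_univ {ι : Type*} [Fintype ι] [DecidableEq ι]
    {S : Matrix ι ι ℝ} (hS : S.PosDef) (μ : ι → ℝ) :
    gaussMeasure S μ Set.univ = 1 := by
  obtain ⟨hint, hval⟩ := gaussDensity_integral hS μ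
  rw [gaussMeasure, withDensity_apply _ MeasurableSet.univ, Measure.restrict_univ,
    ← MeasureTheory.ofReal_integral_eq_lintegral_ofReal hint
      (Filter.Eventually.of_forall fun x => (gaussDensity_pos hS μ x).le), hval,
    ENNReal.ofReal_one]

lemma gaussMeasure_le_one {ι : Type*} [Fintype ι] [DecidableEq ι]
    {S : Matrix ι ι ℝ} (hS : S.PosDef) (μ : ι → ℝ) (B : Set (ι → ℝ)) :
    gaussMeasure S μ B ≤ 1 := by
  rw [← gaussMeasure_univ hS μ]
  exact measure_mono (Set.subset_univ B)

lemma posSemidef_smul' {d : Type*} [Fintype d] {N : Matrix d d ℝ}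
    (hN : N.PosSemidef) {c : ℝ} (hc : 0 ≤ c) : (c • N).PosSemidef := by
  exact hN.smul hc

lemma smul_one_add_posDef {d : Type*} [Fintype d] [DecidableEq d]
    {a : ℝ} (ha : 0 < a) {N : Matrix d d ℝ} (hN : N.PosSemidef) :
    (a • (1 : Matrix d d ℝ) + N).PosDef := by
  exact (Matrix.PosDef.one.smul ha).add_posSemidef hN

/-- Posterior collapse in total variation to the best-scoring Gaussian component,
for an isotropic Gaussian-mixture prior under a linear Gaussian measurement model.
The total-variation bound is stated as a uniform bound over all measurable sets. -/
theorem stmt_1 (m n M : ℕ) (hm : 0 < m)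
    (ystar : Fin m → ℝ) (A : Matrix (Fin m) (Fin n) ℝ)
    (σ τ : ℝ) (hσ : 0 < σ) (hτ : 0 < τ)
    (μ : Fin M → Fin n → ℝ) (w : Fin M → ℝ) (hw : ∀ j, 0 < w j)
    (hwsum : ∑ j, w j = 1)
    -- Σ = σ² I_m + τ² A Aᵀ
    (Cov : Matrix (Fin m) (Fin m) ℝ)
    (hCov : Cov = σ ^ 2 • (1 : Matrix (Fin m) (Fin m) ℝ) + τ ^ 2 • (A * Aᵀ))
    -- scores s_j(y*)
    (s : Fin M → ℝ)
    (hs : ∀ j, s j =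
      (1 / 2) * ((ystar - A *ᵥ μ j) ⬝ᵥ (Cov⁻¹ *ᵥ (ystar - A *ᵥ μ j))))
    -- normalized posterior weights w̃_j ∝ w_j φ(y*; A μ_j, Σ), ∑_j w̃_j = 1
    (wt : Fin M → ℝ)
    (hwt : ∀ j, wt j =
      w j * gaussDensity Cov (A *ᵥ μ j) ystar /
        ∑ i, w i * gaussDensity Cov (A *ᵥ μ i) ystar)
    -- posterior means m_j(y*) = μ_j + τ² Aᵀ Σ⁻¹ (y* − A μ_j)
    (mpost : Fin M → Fin n → ℝ)
    (hmpost : ∀ j, mpost j = μ j + τ ^ 2 • (Aᵀ * Cov⁻¹) *ᵥ (ystar - A *ᵥ μ j))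
    -- posterior covariance Σ_post = τ² I_n − τ⁴ Aᵀ Σ⁻¹ A
    (CovPost : Matrix (Fin n) (Fin n) ℝ)
    (hCovPost : CovPost =
      τ ^ 2 • (1 : Matrix (Fin n) (Fin n) ℝ) - τ ^ 4 • (Aᵀ * Cov⁻¹ * A))
    -- the posterior mixture π(· | y*) = ∑_j w̃_j N(m_j(y*), Σ_post)
    (post : Measure (Fin n → ℝ))
    (hpost : post = ∑ j, ENNReal.ofReal (wt j) • gaussMeasure CovPost (mpost j))
    -- (1) bounded weight ratio
    (C : ℝ) (hC : 1 < C)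
    (hratio : ∀ i j, 1 / C ≤ w i / w j ∧ w i / w j ≤ C)
    -- (2) δ₀-identifiability
    (jstar : Fin M) (hmin : ∀ j, j ≠ jstar → s jstar < s j)
    (δ₀ : ℝ) (hδ₀ : 0 < δ₀)
    (hgap : ∀ j, j ≠ jstar → δ₀ ≤ (s j - s jstar) / m) :
    ∀ B : Set (Fin n → ℝ), MeasurableSet B →
      |(post B).toReal - ((gaussMeasure CovPost (mpost jstar)) B).toReal| ≤
        C * M * Real.exp (-δ₀ * m) := by
  intro B hB
  -- positive definiteness of the covariance matrices
  have hAAT : (A * Aᵀ).PosSemidef := by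
    have := Matrix.posSemidef_self_mul_conjTranspose A
    rwa [Matrix.conjTranspose_eq_transpose_of_trivial] at this
  have hATA : (Aᵀ * A).PosSemidef := by
    have := Matrix.posSemidef_conjTranspose_mul_self A
    rwa [Matrix.conjTranspose_eq_transpose_of_trivial] at this
  have hCovPD : Cov.PosDef := by
    rw [hCov]
    exact smul_one_add_posDef (by positivity) (posSemidef_smul' hAAT (by positivity))
  set D : Matrix (Fin n) (Fin n) ℝ :=
    (τ^2)⁻¹ • (1 : Matrix (Fin n) (Fin n) ℝ) + (σ^2)⁻¹ • (Aᵀ * A) with hD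
  have hDPD : D.PosDef :=
    smul_one_add_posDef (by positivity) (posSemidef_smul' hATA (by positivity))
  have hCinv : Cov⁻¹ * Cov = 1 :=
    Matrix.nonsing_inv_mul _ (isUnit_iff_ne_zero.mpr hCovPD.det_pos.ne')
  have hτ2 : (τ:ℝ)^2 ≠ 0 := by positivity
  have hσ2 : (σ:ℝ)^2 ≠ 0 := by positivity
  have hkey : Cov⁻¹ * (A * (Aᵀ * A))
      = (τ^2)⁻¹ • A - ((σ^2) * (τ^2)⁻¹) • (Cov⁻¹ * A) := by
    have h1 : A * (Aᵀ * A) = (A * Aᵀ) * A := by rw [Matrix.mul_assoc]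
    have h2 : (A * Aᵀ) = (τ^2)⁻¹ • (Cov - σ^2 • 1) := by
      rw [hCov]
      rw [add_sub_cancel_left, smul_smul, inv_mul_cancel₀ hτ2, one_smul]
    rw [h1, h2, Matrix.smul_mul, Matrix.sub_mul, Matrix.smul_mul, Matrix.one_mul,
      Matrix.mul_smul, Matrix.mul_sub, Matrix.mul_smul, ← Matrix.mul_assoc, hCinv,
      Matrix.one_mul, smul_sub, smul_smul]
    rw [mul_comm ((σ:ℝ)^2) ((τ^2)⁻¹)]
  have hWood : CovPost * D = 1 := by
    rw [hCovPost, hD]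
    simp only [Matrix.sub_mul, Matrix.mul_add, Matrix.smul_mul, Matrix.mul_smul,
      Matrix.mul_one, Matrix.one_mul, smul_smul, Matrix.mul_assoc]
    rw [hkey]
    simp only [Matrix.mul_sub, Matrix.mul_smul, smul_sub, smul_smul]
    match_scalars <;> (field_simp; try ring)
  have hCovPostPD : CovPost.PosDef := by
    have hinv : D⁻¹ = CovPost := Matrix.inv_eq_left_inv hWood
    exact hinv ▸ hDPD.inv
  -- weight bounds
  have hmR : (0:ℝ) < (m:ℝ) := Nat.cast_pos.mpr hm
  set E : ℝ := Real.exp (-δ₀ * m) with hE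
  have hEpos : 0 < E := Real.exp_pos _
  have hCpos : (0:ℝ) < C := lt_trans one_pos hC
  set φf : Fin M → ℝ := fun j => gaussDensity Cov (A *ᵥ μ j) ystar with hφf
  have hφpos : ∀ j, 0 < φf j := fun j => gaussDensity_pos hCovPD _ _
  have hKpos : ∀ j, 0 < w j * φf j := fun j => mul_pos (hw j) (hφpos j)
  have hKtotal : 0 < ∑ i, w i * φf i :=
    Finset.sum_pos (fun i _ => hKpos i) ⟨jstar, Finset.mem_univ jstar⟩
  have hwtnn : ∀ j, 0 ≤ wt j := by
    intro j
    rw [hwt j]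
    exact div_nonneg (hKpos j).le hKtotal.le
  have hwtsum : ∑ j, wt j = 1 := by
    have : ∑ j, wt j = (∑ j, w j * φf j) / (∑ i, w i * φf i) := by
      rw [Finset.sum_div]
      exact Finset.sum_congr rfl fun j _ => hwt j
    rw [this, div_self hKtotal.ne']
  -- constant for the density
  set K0 : ℝ := (2 * Real.pi) ^ (-(Fintype.card (Fin m) : ℝ) / 2) * Cov.det ^ (-(1 : ℝ) / 2)
    with hK0
  have hK0pos : 0 < K0 := by
    have h2π : (0:ℝ) < 2 * Real.pi := by positivity
    exact mul_pos (Real.rpow_pos_of_pos h2π _) (Real.rpow_pos_of_pos hCovPD.det_pos _)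
  have hφeq : ∀ j, φf j = K0 * Real.exp (-(s j)) := by
    intro j
    rw [hφf]
    show gaussDensity Cov (A *ᵥ μ j) ystar = _
    unfold gaussDensity
    rw [hK0]
    congr 1
    rw [hs j]
    ring_nf
  have hwtle : ∀ j, j ≠ jstar → wt j ≤ C * E := by
    intro j hj
    have hstep1 : wt j ≤ (w j * φf j) / (w jstar * φf jstar) := by
      rw [hwt j]
      apply div_le_div_of_nonneg_left (hKpos j).le (hKpos jstar)
      exact Finset.single_le_sum (fun i _ => (hKpos i).le) (Finset.mem_univ jstar)
    have hstep2 : (w j * φf j) / (w jstar * φf jstar)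
        = (w j / w jstar) * (φf j / φf jstar) := by
      rw [div_mul_div_comm]
    have hstep3 : φf j / φf jstar = Real.exp (s jstar - s j) := by
      rw [hφeq j, hφeq jstar, mul_div_mul_left _ _ hK0pos.ne', ← Real.exp_sub]
      congr 1
      ring
    have hstep4 : Real.exp (s jstar - s j) ≤ E := by
      rw [hE]
      apply Real.exp_le_exp.mpr
      have := hgap j hj
      have h6 : δ₀ * m ≤ s j - s jstar := by
        rw [← le_div_iff₀ hmR] at *
        exact this
      linarith
    have hwr : w j / w jstar ≤ C := (hratio j jstar).2
    have hwrpos : 0 < w j / w jstar := div_pos (hw j) (hw jstar)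
    calc wt j ≤ (w j / w jstar) * (φf j / φf jstar) := by rw [← hstep2]; exact hstep1
      _ ≤ C * E := by
          apply mul_le_mul hwr (hstep3 ▸ hstep4) _ hCpos.le
          rw [hstep3]
          exact (Real.exp_pos _).le
  -- measure arithmetic
  set ν : Fin M → Measure (Fin n → ℝ) := fun j => gaussMeasure CovPost (mpost j) with hν
  have hνle : ∀ j, ν j B ≤ 1 := fun j => gaussMeasure_le_one hCovPostPD _ B
  have hνne : ∀ j, ν j B ≠ ⊤ := fun j => (lt_of_le_of_lt (hνle j) ENNReal.one_lt_top).ne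
  set p : Fin M → ℝ := fun j => (ν j B).toReal with hp
  have hp0 : ∀ j, 0 ≤ p j := fun j => ENNReal.toReal_nonneg
  have hp1 : ∀ j, p j ≤ 1 := by
    intro j
    have := ENNReal.toReal_mono ENNReal.one_ne_top (hνle j)
    simpa using this
  have hpostB : (post B).toReal = ∑ j, wt j * p j := by
    rw [hpost, Measure.finset_sum_apply]
    rw [ENNReal.toReal_sum (fun j _ => ?_)]
    · apply Finset.sum_congr rfl
      intro j _
      rw [Measure.smul_apply, smul_eq_mul, ENNReal.toReal_mul,
        ENNReal.toReal_ofReal (hwtnn j)]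
    · rw [Measure.smul_apply, smul_eq_mul]
      exact ENNReal.mul_ne_top ENNReal.ofReal_ne_top (hνne j)
  rw [hpostB]
  have hsplit : ∑ j, wt j * p j - p jstar = ∑ j, wt j * (p j - p jstar) := by
    simp only [mul_sub]
    rw [Finset.sum_sub_distrib, ← Finset.sum_mul, hwtsum, one_mul]
  show |(∑ j, wt j * p j) - p jstar| ≤ C * M * E
  rw [hsplit]
  have hterm : ∀ j ∈ Finset.univ, |wt j * (p j - p jstar)| ≤ C * E := by
    intro j _
    by_cases hj : j = jstar
    · rw [hj]
      simp [mul_pos hCpos hEpos |>.le]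
    · rw [abs_mul, abs_of_nonneg (hwtnn j)]
      have habs1 : |p j - p jstar| ≤ 1 := by
        rw [abs_le]
        constructor <;> [linarith [hp0 j, hp1 jstar]; linarith [hp1 j, hp0 jstar]]
      calc wt j * |p j - p jstar| ≤ wt j * 1 :=
            mul_le_mul_of_nonneg_left habs1 (hwtnn j)
        _ = wt j := mul_one _
        _ ≤ C * E := hwtle j hj
  calc |∑ j, wt j * (p j - p jstar)| ≤ ∑ j, |wt j * (p j - p jstar)| :=
        Finset.abs_sum_le_sum_abs _ _
    _ ≤ ∑ _j : Fin M, C * E := Finset.sum_le_sum hterm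
    _ = M * (C * E) := by rw [Finset.sum_const, Finset.card_univ, Fintype.card_fin,
        nsmul_eq_mul]
    _ = C * M * E := by ring
end

section
/- Let y* ∈ ℝ^m, A ∈ ℝ^{m×n}, σ > 0, and let μ_1, …, μ_M ∈ ℝ^n, τ_1, …, τ_M > 0, with positive weights w_1, …, w_M summing to 1. Set Σ_j = σ² I_m + τ_j² A Aᵀ, s_j(y*) = (1/2)(y* − A μ_j)ᵀ Σ_j⁻¹ (y* − A μ_j), and the selection score ℓ_j(y*) = s_j(y*) + (1/2) log det(Σ_j). Let w̃_j(y*) = w_j φ(y*; A μ_j, Σ_j) / ∑_{i=1}^M w_i φ(y*; A μ_i, Σ_i). Assume (1) there exists C > 1 with 1/C ≤ w_i/w_j ≤ C for all i, j, and (2) there is a unique minimizer j* of ℓ_j(y*) and (ℓ_{(2)}(y*) − ℓ_{(1)}(y*))/m ≥ δ₀ for some δ₀ > 0, where ℓ_{(1)}, ℓ_{(2)} are the smallest and second smallest selection scores. Then ∑_{j ≠ j*} w̃_j(y*) ≤ C·M·exp(−m·δ₀). -/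
open MeasureTheory Matrix Finset

lemma aux_posDef {m n : ℕ} (A : Matrix (Fin m) (Fin n) ℝ) {σ τ : ℝ} (hσ : 0 < σ) (hτ : 0 < τ) :
    (σ ^ 2 • (1 : Matrix (Fin m) (Fin m) ℝ) + τ ^ 2 • (A * Aᵀ)).PosDef := by
  have hAt : Aᴴ = Aᵀ := by ext i j; simp [conjTranspose_apply]
  have hps : (A * Aᵀ).PosSemidef := by
    simpa [hAt] using posSemidef_self_mul_conjTranspose A
  refine Matrix.PosDef.of_dotProduct_mulVec_pos ?_ ?_
  · simp [Matrix.IsHermitian, conjTranspose_add, conjTranspose_smul, conjTranspose_one, hps.1.eq]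
  · intro x hx
    have h1 : (0:ℝ) < star x ⬝ᵥ x := dotProduct_star_self_pos_iff.mpr hx
    have h2 : (0:ℝ) ≤ star x ⬝ᵥ ((A * Aᵀ) *ᵥ x) := hps.dotProduct_mulVec_nonneg x
    have : star x ⬝ᵥ ((σ ^ 2 • (1 : Matrix (Fin m) (Fin m) ℝ) + τ ^ 2 • (A * Aᵀ)) *ᵥ x)
        = σ ^ 2 * (star x ⬝ᵥ x) + τ ^ 2 * (star x ⬝ᵥ ((A * Aᵀ) *ᵥ x)) := by
      simp [add_mulVec, smul_mulVec, dotProduct_add, dotProduct_smul, smul_eq_mul]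
    rw [this]
    nlinarith [mul_pos (pow_pos hσ 2) h1, mul_nonneg (le_of_lt (pow_pos hτ 2)) h2]

/-- Posterior component-selection probability bound for a heterogeneous-variance
Gaussian-mixture prior under a linear Gaussian measurement model, with the
selection score `ℓ_j = s_j + (1/2) log det Σ_j`. -/
theorem stmt_2 (m n M : ℕ) (hm : 0 < m)
    (ystar : Fin m → ℝ) (A : Matrix (Fin m) (Fin n) ℝ)
    (σ : ℝ) (hσ : 0 < σ)
    (μ : Fin M → Fin n → ℝ) (τ : Fin M → ℝ) (hτ : ∀ j, 0 < τ j)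
    (w : Fin M → ℝ) (hw : ∀ j, 0 < w j) (hwsum : ∑ j, w j = 1)
    -- Σ_j = σ² I_m + τ_j² A Aᵀ
    (Cov : Fin M → Matrix (Fin m) (Fin m) ℝ)
    (hCov : ∀ j, Cov j =
      σ ^ 2 • (1 : Matrix (Fin m) (Fin m) ℝ) + (τ j) ^ 2 • (A * Aᵀ))
    -- scores s_j(y*)
    (s : Fin M → ℝ)
    (hs : ∀ j, s j =
      (1 / 2) * ((ystar - A *ᵥ μ j) ⬝ᵥ ((Cov j)⁻¹ *ᵥ (ystar - A *ᵥ μ j))))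
    -- selection scores ℓ_j(y*) = s_j(y*) + (1/2) log det Σ_j
    (ℓ : Fin M → ℝ)
    (hℓ : ∀ j, ℓ j = s j + (1 / 2) * Real.log (Cov j).det)
    -- normalized posterior weights
    (wt : Fin M → ℝ)
    (hwt : ∀ j, wt j =
      w j * gaussDensity (Cov j) (A *ᵥ μ j) ystar /
        ∑ i, w i * gaussDensity (Cov i) (A *ᵥ μ i) ystar)
    -- (1) bounded weight ratio
    (C : ℝ) (hC : 1 < C)
    (hratio : ∀ i j, 1 / C ≤ w i / w j ∧ w i / w j ≤ C)
    -- (2) δ₀-identifiability in selection score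
    (jstar : Fin M) (hmin : ∀ j, j ≠ jstar → ℓ jstar < ℓ j)
    (δ₀ : ℝ) (hδ₀ : 0 < δ₀)
    (hgap : ∀ j, j ≠ jstar → δ₀ ≤ (ℓ j - ℓ jstar) / m) :
    ∑ j ∈ univ \ {jstar}, wt j ≤ C * M * Real.exp (-(m : ℝ) * δ₀) := by
  set g : Fin M → ℝ := fun j => gaussDensity (Cov j) (A *ᵥ μ j) ystar with hg
  set c : ℝ := (2 * Real.pi) ^ (-(m : ℝ) / 2) with hc
  have hcpos : 0 < c := Real.rpow_pos_of_pos (by positivity) _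
  have hdet : ∀ j, 0 < (Cov j).det := fun j => by
    rw [hCov j]; exact (aux_posDef A hσ (hτ j)).det_pos
  have hgexp : ∀ j, g j = c * Real.exp (-ℓ j) := by
    intro j
    have : ((Cov j).det : ℝ) ^ (-(1:ℝ) / 2) = Real.exp (Real.log (Cov j).det * (-(1:ℝ)/2)) := by
      rw [Real.rpow_def_of_pos (hdet j)]
    simp only [hg, gaussDensity, Fintype.card_fin, this, hc]
    rw [mul_assoc, ← Real.exp_add]
    congr 1
    rw [hℓ j, hs j]; ring
  have hgpos : ∀ j, 0 < g j := fun j => by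
    rw [hgexp j]; positivity
  set D : ℝ := ∑ i, w i * g i with hD
  have hDpos : 0 < D :=
    Finset.sum_pos (fun i _ => mul_pos (hw i) (hgpos i)) ⟨jstar, mem_univ jstar⟩
  have hDge : w jstar * g jstar ≤ D :=
    Finset.single_le_sum (fun i _ => le_of_lt (mul_pos (hw i) (hgpos i))) (mem_univ jstar)
  have key : ∀ j, j ≠ jstar → wt j ≤ C * Real.exp (-(m : ℝ) * δ₀) := by
    intro j hj
    have hwtj : wt j = w j * g j / D := hwt j
    have h1 : wt j ≤ w j * g j / (w jstar * g jstar) := by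
      rw [hwtj]
      exact div_le_div_of_nonneg_left (le_of_lt (mul_pos (hw j) (hgpos j)))
        (mul_pos (hw jstar) (hgpos jstar)) hDge
    have h2 : w j * g j / (w jstar * g jstar)
        = (w j / w jstar) * Real.exp (ℓ jstar - ℓ j) := by
      rw [hgexp j, hgexp jstar,
        show -ℓ j = (ℓ jstar - ℓ j) + -ℓ jstar by ring, Real.exp_add]
      field_simp [hcpos.ne', (Real.exp_pos (-ℓ jstar)).ne', (hw jstar).ne']
    have hexp : ℓ jstar - ℓ j ≤ -(m : ℝ) * δ₀ := by
      have := hgap j hj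
      have hmr : (0:ℝ) < (m:ℝ) := by exact_mod_cast hm
      rw [le_div_iff₀ hmr] at this
      nlinarith
    have h3 : (w j / w jstar) * Real.exp (ℓ jstar - ℓ j)
        ≤ C * Real.exp (-(m : ℝ) * δ₀) := by
      have hwr : w j / w jstar ≤ C := (hratio j jstar).2
      have hwrpos : 0 < w j / w jstar := div_pos (hw j) (hw jstar)
      exact mul_le_mul hwr (Real.exp_le_exp.mpr hexp) (le_of_lt (Real.exp_pos _))
        (by linarith)
    calc wt j ≤ (w j / w jstar) * Real.exp (ℓ jstar - ℓ j) := h2 ▸ h1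
      _ ≤ C * Real.exp (-(m : ℝ) * δ₀) := h3
  calc ∑ j ∈ univ \ {jstar}, wt j
      ≤ ∑ j ∈ univ \ {jstar}, C * Real.exp (-(m : ℝ) * δ₀) := by
        refine Finset.sum_le_sum fun j hj => key j ?_
        simpa [Finset.mem_sdiff] using hj
    _ = ((univ \ {jstar}).card : ℝ) * (C * Real.exp (-(m : ℝ) * δ₀)) := by
        rw [Finset.sum_const, nsmul_eq_mul]
    _ ≤ (M : ℝ) * (C * Real.exp (-(m : ℝ) * δ₀)) := by
        have hcard : (univ \ {jstar} : Finset (Fin M)).card ≤ M := by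
          calc (univ \ {jstar} : Finset (Fin M)).card ≤ (univ : Finset (Fin M)).card :=
            Finset.card_le_card (Finset.sdiff_subset)
          _ = M := by simp
        have : ((univ \ {jstar} : Finset (Fin M)).card : ℝ) ≤ (M : ℝ) := by exact_mod_cast hcard
        exact mul_le_mul_of_nonneg_right this (by positivity)
    _ = C * M * Real.exp (-(m : ℝ) * δ₀) := by ring
end
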